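/- For q = 1, the R-linear bijection d ↦ d' from R𝔖_{r+s} to the walled Brauer algebra B^n_{r,s} (obtained on diagrams by rotating/flipping the vertices to the right of the wall, exchanging each top vertex with the corresponding bottom vertex) intertwines the endomorphism representations: if σ_{r+s}(d) ∈ End_{GL_n(R)}(V^{⊗(r+s)}) corresponds to σ_{r,s}(d') ∈ End_{GL_n(R)}(V^{⊗r} ⊗ (V*)^{⊗s}) under the canonical isomorphism End_R(V^{⊗(r+s)}) ≅ End_R(V^{⊗r} ⊗ (V*)^{⊗s}) given by permuting tensor factors (identifying V ≅ V* via v_i ↦ v_i*), then the resulting square of maps commutes. -/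

import Mathlib

namespace ClassicalWalledBrauer

variable (R : Type*) [CommRing R] (n r s : ℕ)

/-- Multi-indices labelling the basis of `V^{⊗r} ⊗ (V^*)^{⊗s}` (or of `V^{⊗(r+s)}`),
`V = R^n`. -/
abbrev Idx (n m : ℕ) := Fin m → Fin n

/-- Mixed tensor space `V^{⊗r} ⊗ (V^*)^{⊗s}` (and likewise ordinary tensor space
`V^{⊗(r+s)}`), modelled on its basis of multi-indices; positions `< r` carry `V`,
positions `≥ r` carry `V^*` (identified with `V` via `v_i ↦ v_i^*`). -/
abbrev TSpace (R : Type*) [CommRing R] (n m : ℕ) := Idx n m → R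

/-- Matrix of the action of `g ∈ GL_n(R)` on mixed tensor space: `g` acts naturally on the
`V`-factors (positions `< r`) and by `(g·f)(v) = f(g⁻¹ v)` on the `V^*`-factors. -/
def glMixedMatrix (g : GL (Fin n) R) : Matrix (Idx n (r + s)) (Idx n (r + s)) R :=
  fun a a' => ∏ k : Fin (r + s),
    if (k : ℕ) < r then (g : Matrix (Fin n) (Fin n) R) (a k) (a' k)
    else ((g⁻¹ : GL (Fin n) R) : Matrix (Fin n) (Fin n) R) (a' k) (a k)

/-- Matrix of the natural action of `g ∈ GL_n(R)` on ordinary tensor space `V^{⊗m}`. -/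
def glOrdMatrix (m : ℕ) (g : GL (Fin n) R) : Matrix (Idx n m) (Idx n m) R :=
  fun a a' => ∏ k : Fin m, (g : Matrix (Fin n) (Fin n) R) (a k) (a' k)

/-- `G`-endomorphisms of mixed tensor space. -/
def EndGMixed : Set (Module.End R (TSpace R n (r + s))) :=
  {φ | ∀ g : GL (Fin n) R, Commute φ (Matrix.toLin' (glMixedMatrix R n r s g))}

/-- `G`-endomorphisms of ordinary tensor space `V^{⊗(r+s)}`. -/
def EndGOrd : Set (Module.End R (TSpace R n (r + s))) :=
  {φ | ∀ g : GL (Fin n) R, Commute φ (Matrix.toLin' (glOrdMatrix R n (r + s) g))}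

/-- Vertices of a Brauer `(r+s)`-diagram: top row (`inl`) and bottom row (`inr`). -/
abbrev Vertex (m : ℕ) := Fin m ⊕ Fin m

/-- The row (top = `true`) of a vertex. -/
def rowOf {m : ℕ} : Vertex m → Bool := Sum.elim (fun _ => true) (fun _ => false)

/-- Whether a vertex lies to the left of the wall (in the first `r` positions). -/
def leftOf {m : ℕ} (r : ℕ) : Vertex m → Bool :=
  Sum.elim (fun k => decide ((k : ℕ) < r)) (fun k => decide ((k : ℕ) < r))

/-- A walled Brauer diagram: a perfect matching of the `2(r+s)` vertices such that
propagating edges (connecting opposite rows) stay on one side of the wall, and horizontal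
edges (within a row) cross the wall. -/
def IsWalled (d : Vertex (r + s) → Vertex (r + s)) : Prop :=
  (∀ v, d (d v) = v) ∧ (∀ v, d v ≠ v) ∧
  (∀ v, (rowOf v ≠ rowOf (d v) → leftOf r v = leftOf r (d v)) ∧
        (rowOf v = rowOf (d v) → leftOf r v ≠ leftOf r (d v)))

/-- The walled Brauer diagrams. -/
def WalledDiagram := {d : Vertex (r + s) → Vertex (r + s) // IsWalled r s d}

/-- The matrix of the action of a Brauer diagram `d` (for `q = 1`): the `(a, b)` entry is
`1` if both ends of each edge of `d` carry the same index (top row labelled by `a`, bottom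
row by `b`), and `0` otherwise. -/
def diagMatrix (m : ℕ) (d : Vertex m → Vertex m) : Matrix (Idx n m) (Idx n m) R :=
  fun a b =>
    if ∀ v, Sum.elim a b v = Sum.elim a b (d v) then 1 else 0

/-- Matrix of the place-permutation action of `σ ∈ 𝔖_m` on `V^{⊗m}` (the totally
propagating Brauer diagram of `σ`). -/
def permMatrix (m : ℕ) (σ : Equiv.Perm (Fin m)) : Matrix (Idx n m) (Idx n m) R :=
  fun a b => if b = a ∘ σ then 1 else 0


/-- The totally propagating Brauer diagram of a permutation `σ`: top vertex `σ k'` is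
joined to bottom vertex `k'`. -/
def permDiagram (m : ℕ) (σ : Equiv.Perm (Fin m)) : Vertex m → Vertex m :=
  Sum.elim (fun k => Sum.inr (σ⁻¹ k)) (fun k' => Sum.inl (σ k'))

/-- The flip interchanging, to the right of the wall, each top vertex with the
corresponding bottom vertex. -/
def flip : Vertex (r + s) → Vertex (r + s) :=
  Sum.elim (fun k => if (k : ℕ) < r then Sum.inl k else Sum.inr k)
    (fun k => if (k : ℕ) < r then Sum.inr k else Sum.inl k)

/-- The multi-index mixing `a` (positions `< r`) and `b` (positions `≥ r`). -/
def mix (a b : Idx n (r + s)) : Idx n (r + s) := fun k => if (k : ℕ) < r then a k else b k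

/-- The canonical `R`-linear isomorphism
`End_R(V^{⊗(r+s)}) ≅ End_R(V^{⊗r} ⊗ (V^*)^{⊗s})` given by permuting tensor factors
(identifying `V ≅ V^*` via `v_i ↦ v_i^*`); on matrices it exchanges, for the positions to
the right of the wall, the row and column entries. -/
noncomputable def theta (φ : Module.End R (TSpace R n (r + s))) :
    Module.End R (TSpace R n (r + s)) :=
  Matrix.toLin' (fun a b => LinearMap.toMatrix' φ (mix n r s a b) (mix n r s b a))

/-- q = 1: the square commutes — for every totally propagating Brauer
diagram (permutation `σ`), the canonical isomorphism
`End_R(V^{⊗(r+s)}) ≅ End_R(V^{⊗r} ⊗ (V^*)^{⊗s})` carries the place-permutation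
endomorphism `σ_{r+s}(d)` to the walled-Brauer endomorphism `σ_{r,s}(d')`, where `d'` is
the diagram `d` with the vertices to the right of the wall flipped. -/
theorem theta_intertwines (σ : Equiv.Perm (Fin (r + s))) :
    theta R n r s (Matrix.toLin' (permMatrix R n (r + s) σ)) =
      Matrix.toLin'
        (diagMatrix R n (r + s) (flip r s ∘ permDiagram (r + s) σ ∘ flip r s)) := by
  unfold theta
  congr 1
  funext a b
  rw [LinearMap.toMatrix'_toLin']
  unfold permMatrix diagMatrix
  have key : (mix n r s b a = mix n r s a b ∘ σ) ↔
      (∀ v, Sum.elim a b v =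
        Sum.elim a b ((flip r s ∘ permDiagram (r + s) σ ∘ flip r s) v)) := by
    constructor
    · intro h v
      have h' : ∀ k, mix n r s b a k = mix n r s a b (σ k) := fun k => congrFun h k
      rcases v with k | k
      · by_cases hk : (k : ℕ) < r
        · have t := h' (σ⁻¹ k)
          simp only [mix, (Equiv.apply_symm_apply σ k : σ (σ⁻¹ k) = k), hk, if_true] at t
          simp only [Function.comp, flip, permDiagram, Sum.elim_inl, hk, if_true,
            Sum.elim_inr]
          by_cases hk2 : ((σ⁻¹ k : Fin (r + s)) : ℕ) < r
          · rw [if_pos hk2] at t ⊢; simpa [hk] using t.symm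
          · rw [if_neg hk2] at t ⊢; simpa [hk] using t.symm
        · have t := h' k
          simp only [mix, hk, if_false] at t
          simp only [Function.comp, flip, permDiagram, Sum.elim_inl, hk, if_false,
            Sum.elim_inr]
          by_cases hk2 : ((σ k : Fin (r + s)) : ℕ) < r
          · rw [if_pos hk2] at t ⊢; simpa using t
          · rw [if_neg hk2] at t ⊢; simpa using t
      · by_cases hk : (k : ℕ) < r
        · have t := h' k
          simp only [mix, hk, if_true] at t
          simp only [Function.comp, flip, permDiagram, Sum.elim_inr, hk, if_true,
            Sum.elim_inl]
          by_cases hk2 : ((σ k : Fin (r + s)) : ℕ) < r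
          · rw [if_pos hk2] at t ⊢; simpa using t
          · rw [if_neg hk2] at t ⊢; simpa using t
        · have t := h' (σ⁻¹ k)
          simp only [mix, (Equiv.apply_symm_apply σ k : σ (σ⁻¹ k) = k), hk, if_false] at t
          simp only [Function.comp, flip, permDiagram, Sum.elim_inr, hk, if_false,
            Sum.elim_inl]
          by_cases hk2 : ((σ⁻¹ k : Fin (r + s)) : ℕ) < r
          · rw [if_pos hk2] at t ⊢; simpa [hk] using t.symm
          · rw [if_neg hk2] at t ⊢; simpa [hk] using t.symm
    · intro h
      funext k
      simp only [mix, Function.comp]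
      by_cases hk : (k : ℕ) < r
      · rw [if_pos hk]
        have t := h (Sum.inr k)
        simp only [Function.comp, flip, permDiagram, Sum.elim_inr, hk, if_true,
          Sum.elim_inl] at t
        by_cases hk2 : ((σ k : Fin (r + s)) : ℕ) < r
        · rw [if_pos hk2] at t ⊢; simpa using t
        · rw [if_neg hk2] at t ⊢; simpa using t
      · rw [if_neg hk]
        have t := h (Sum.inl k)
        simp only [Function.comp, flip, permDiagram, Sum.elim_inl, hk, if_false,
          Sum.elim_inr] at t
        by_cases hk2 : ((σ k : Fin (r + s)) : ℕ) < r
        · rw [if_pos hk2] at t ⊢; simpa using t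
        · rw [if_neg hk2] at t ⊢; simpa using t
  simp [key]

end ClassicalWalledBrauer
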